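/- arXiv:1507.06707 — 2 statements merged into one kernel-verified Lean document; each statement's English description precedes it below -/
import Mathlib

section
/- In a single round where each of n balls is placed independently and uniformly at random into one of n bins, for sufficiently large n the probability that the maximum bin load is less than log n / log log n is at most 1/n (i.e., the maximum load is Ω(log n / log log n) with high probability). -/
open Finset

/-- The load of bin `b` when the balls are placed according to `f`. -/
def load (n : ℕ) (f : Fin n → Fin n) (b : Fin n) : ℕ :=
  (Finset.univ.filter (fun i => f i = b)).card

/-- The maximum bin load for the placement `f`. -/
def maxLoad (n : ℕ) (f : Fin n → Fin n) : ℕ :=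
  Finset.univ.sup (load n f)

namespace BB

open Filter

/-- functions whose first `j` bins all have load `< k` -/
def Sset (n k j : ℕ) : Finset (Fin n → Fin n) :=
  univ.filter fun f => ∀ b : Fin n, (b : ℕ) < j → load n f b < k

/-- the partial placement restricted to the first `j` bins -/
def classify (n j : ℕ) (f : Fin n → Fin n) : Fin n → Option (Fin n) :=
  fun i => if (f i : ℕ) < j then some (f i) else none

/-- the free balls of a partial placement -/
def Aset (n j : ℕ) (g : Fin n → Option (Fin n)) : Finset (Fin n) :=
  univ.filter fun i => g i = none

def sfun (n j : ℕ) (g : Fin n → Option (Fin n)) (i : Fin n) : Finset (Fin n) :=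
  match g i with
  | some b => {b}
  | none => univ.filter fun b : Fin n => j ≤ (b : ℕ)

noncomputable def pp (k : ℕ) : ℝ := Real.exp (-4) * ((4 * k : ℝ))⁻¹ ^ k

noncomputable def kk (n : ℕ) : ℕ := ⌊Real.log n / Real.log (Real.log n)⌋₊ + 1

noncomputable def tt (n : ℕ) : ℕ := n / (2 * kk n)

lemma card_high (n j : ℕ) :
    ((univ : Finset (Fin n)).filter fun b : Fin n => j ≤ (b : ℕ)).card = n - j := by
  rw [show n - j = (Finset.Ico j n).card by simp]
  apply Finset.card_bij (fun (b : Fin n) (_ : b ∈ univ.filter fun b : Fin n => j ≤ (b : ℕ)) => (b : ℕ))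
  · intro a ha
    simp only [mem_filter, mem_univ, true_and] at ha
    simp only [Finset.mem_Ico]
    exact ⟨ha, a.isLt⟩
  · intro a _ b _ h
    exact Fin.val_injective h
  · intro c hc
    simp only [Finset.mem_Ico] at hc
    exact ⟨⟨c, hc.2⟩, by simp [hc.1], rfl⟩

lemma card_low (n j : ℕ) :
    ((univ : Finset (Fin n)).filter fun b : Fin n => (b : ℕ) < j).card ≤ j := by
  have : ((univ : Finset (Fin n)).filter fun b : Fin n => (b : ℕ) < j).card ≤ (Finset.range j).card := by
    apply Finset.card_le_card_of_injOn (fun b : Fin n => (b : ℕ))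
    · intro a ha
      rw [Finset.mem_coe, mem_filter] at ha
      simp [ha.2]
    · intro a _ b _ h
      exact Fin.val_injective h
  simpa using this

lemma mem_fiber_iff {n k j : ℕ} {g : Fin n → Option (Fin n)}
    (hg : ∀ i b, g i = some b → (b : ℕ) < j) (f : Fin n → Fin n) :
    classify n j f = g ↔ ∀ i, f i ∈ sfun n j g i := by
  constructor
  · rintro rfl i
    unfold sfun classify
    by_cases h : (f i : ℕ) < j <;> simp [h]
    omega
  · intro h
    funext i
    have hi := h i
    unfold sfun at hi
    unfold classify
    cases hgi : g i with
    | some b =>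
      rw [hgi] at hi
      simp only [Finset.mem_singleton] at hi
      subst hi
      simp [hg i (f i) hgi]
    | none =>
      rw [hgi] at hi
      simp only [mem_filter, mem_univ, true_and] at hi
      rw [if_neg (by omega)]

lemma fiber_eq_piFinset {n k j : ℕ} {g : Fin n → Option (Fin n)}
    (hg : ∀ i b, g i = some b → (b : ℕ) < j) :
    (univ : Finset (Fin n → Fin n)).filter (fun f => classify n j f = g)
      = Fintype.piFinset (sfun n j g) := by
  ext f
  simp only [mem_filter, mem_univ, true_and, Fintype.mem_piFinset]
  exact mem_fiber_iff (k := k) hg f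

lemma card_fiber {n k j : ℕ} {g : Fin n → Option (Fin n)}
    (hg : ∀ i b, g i = some b → (b : ℕ) < j) :
    ((univ : Finset (Fin n → Fin n)).filter (fun f => classify n j f = g)).card
      = (n - j) ^ (Aset n j g).card := by
  rw [fiber_eq_piFinset (k := k) hg, Fintype.card_piFinset]
  rw [← Finset.prod_filter_mul_prod_filter_not univ (fun i => g i = none)]
  have h1 : ∀ i ∈ univ.filter (fun i => g i = none), (sfun n j g i).card = n - j := by
    intro i hi
    simp only [mem_filter] at hi
    unfold sfun
    rw [hi.2]
    exact card_high n j
  have h2 : ∀ i ∈ univ.filter (fun i => ¬ g i = none), (sfun n j g i).card = 1 := by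
    intro i hi
    simp only [mem_filter] at hi
    unfold sfun
    obtain ⟨b, hb⟩ := Option.ne_none_iff_exists'.mp hi.2
    rw [hb]
    simp
  rw [Finset.prod_congr rfl h1, Finset.prod_congr rfl h2]
  simp [Aset]


def sfun2 (n j : ℕ) (g : Fin n → Option (Fin n)) (bj : Fin n) (K : Finset (Fin n)) (i : Fin n) :
    Finset (Fin n) :=
  if i ∈ K then {bj} else
  match g i with
  | some b => {b}
  | none => univ.filter fun b : Fin n => j + 1 ≤ (b : ℕ)

lemma sfun2_spec {n k j : ℕ} (hj : j < n) {g : Fin n → Option (Fin n)}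
    (hg : ∀ i b, g i = some b → (b : ℕ) < j) {K : Finset (Fin n)} (hK : K ⊆ Aset n j g)
    {f : Fin n → Fin n} (hf : f ∈ Fintype.piFinset (sfun2 n j g ⟨j, hj⟩ K)) :
    classify n j f = g ∧ univ.filter (fun i => f i = (⟨j, hj⟩ : Fin n)) = K := by
  simp only [Fintype.mem_piFinset] at hf
  constructor
  · funext i
    have hi := hf i
    unfold sfun2 at hi
    by_cases hiK : i ∈ K
    · rw [if_pos hiK] at hi
      simp only [Finset.mem_singleton] at hi
      have hgi : g i = none := by
        have := hK hiK
        simpa [Aset] using this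
      rw [hgi]
      unfold classify
      rw [hi]
      simp
    · rw [if_neg hiK] at hi
      cases hgi : g i with
      | some b =>
        rw [hgi] at hi
        simp only [Finset.mem_singleton] at hi
        unfold classify
        rw [hi, if_pos (hg i b hgi)]
      | none =>
        rw [hgi] at hi
        simp only [mem_filter, mem_univ, true_and] at hi
        unfold classify
        rw [if_neg (by omega)]
  · ext i
    simp only [mem_filter, mem_univ, true_and]
    have hi := hf i
    unfold sfun2 at hi
    by_cases hiK : i ∈ K
    · rw [if_pos hiK] at hi
      simp only [Finset.mem_singleton] at hi
      simp [hi, hiK]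
    · rw [if_neg hiK] at hi
      simp only [hiK, iff_false]
      cases hgi : g i with
      | some b =>
        rw [hgi] at hi
        simp only [Finset.mem_singleton] at hi
        intro hc
        rw [hc] at hi
        have h1 := hg i b hgi
        have h2 := congrArg Fin.val hi
        simp at h2
        omega
      | none =>
        rw [hgi] at hi
        simp only [mem_filter, mem_univ, true_and] at hi
        intro hc
        rw [hc] at hi
        simp at hi

lemma card_sfun2 {n j : ℕ} (hj : j < n) {g : Fin n → Option (Fin n)}
    {K : Finset (Fin n)} (hK : K ⊆ Aset n j g) :
    (Fintype.piFinset (sfun2 n j g ⟨j, hj⟩ K)).card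
      = (n - (j + 1)) ^ ((Aset n j g).card - K.card) := by
  rw [Fintype.card_piFinset]
  have h : ∀ i : Fin n, (sfun2 n j g ⟨j, hj⟩ K i).card
      = if i ∈ Aset n j g \ K then n - (j + 1) else 1 := by
    intro i
    unfold sfun2
    by_cases hiK : i ∈ K
    · rw [if_pos hiK]
      simp [hiK]
    · rw [if_neg hiK]
      cases hgi : g i with
      | some b =>
        have hA : i ∉ Aset n j g := by simp [Aset, hgi]
        simp [hA, hiK, Finset.mem_sdiff]
      | none =>
        have hA : i ∈ Aset n j g := by simp [Aset, hgi]
        rw [card_high n (j + 1)]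
        simp [hA, hiK, Finset.mem_sdiff]
  rw [Finset.prod_congr rfl (fun i _ => h i)]
  rw [Finset.prod_ite_mem univ (Aset n j g \ K) (fun _ => n - (j + 1))]
  rw [Finset.univ_inter, Finset.prod_const, Finset.card_sdiff_of_subset hK]

lemma target_card_ge {n k j : ℕ} (hj : j < n) {g : Fin n → Option (Fin n)}
    (hg : ∀ i b, g i = some b → (b : ℕ) < j) :
    (Aset n j g).card.choose k * (n - (j + 1)) ^ ((Aset n j g).card - k)
      ≤ ((univ : Finset (Fin n → Fin n)).filter
          (fun f => classify n j f = g ∧ k ≤ load n f ⟨j, hj⟩)).card := by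
  classical
  have hsub : ((Aset n j g).powersetCard k).biUnion
      (fun K => Fintype.piFinset (sfun2 n j g ⟨j, hj⟩ K))
      ⊆ (univ : Finset (Fin n → Fin n)).filter
          (fun f => classify n j f = g ∧ k ≤ load n f ⟨j, hj⟩) := by
    intro f hf
    simp only [Finset.mem_biUnion] at hf
    obtain ⟨K, hKmem, hfK⟩ := hf
    obtain ⟨hKsub, hKcard⟩ := Finset.mem_powersetCard.mp hKmem
    obtain ⟨h1, h2⟩ := sfun2_spec (k := k) hj hg hKsub hfK
    simp only [mem_filter, mem_univ, true_and]
    refine ⟨h1, ?_⟩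
    unfold load
    rw [h2, hKcard]
  have hdisj : ∀ K ∈ (Aset n j g).powersetCard k, ∀ K' ∈ (Aset n j g).powersetCard k,
      K ≠ K' → Disjoint (Fintype.piFinset (sfun2 n j g ⟨j, hj⟩ K))
        (Fintype.piFinset (sfun2 n j g ⟨j, hj⟩ K')) := by
    intro K hKmem K' hKmem' hne
    rw [Finset.disjoint_left]
    intro f hfK hfK'
    have h2 := (sfun2_spec (k := k) hj hg (Finset.mem_powersetCard.mp hKmem).1 hfK).2
    have h2' := (sfun2_spec (k := k) hj hg (Finset.mem_powersetCard.mp hKmem').1 hfK').2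
    exact hne (h2 ▸ h2')
  calc (Aset n j g).card.choose k * (n - (j + 1)) ^ ((Aset n j g).card - k)
      = ∑ K ∈ (Aset n j g).powersetCard k,
          (Fintype.piFinset (sfun2 n j g ⟨j, hj⟩ K)).card := by
        rw [Finset.sum_congr rfl (fun K hK => card_sfun2 hj (Finset.mem_powersetCard.mp hK).1)]
        rw [Finset.sum_congr rfl (fun K hK => by
          rw [(Finset.mem_powersetCard.mp hK).2])]
        rw [Finset.sum_const, Finset.card_powersetCard, smul_eq_mul]
    _ = (((Aset n j g).powersetCard k).biUnion
          (fun K => Fintype.piFinset (sfun2 n j g ⟨j, hj⟩ K))).card :=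
        (Finset.card_biUnion hdisj).symm
    _ ≤ _ := Finset.card_le_card hsub


lemma choose_lower {c r k : ℕ} (h : c ≤ 4 * (r + 1 - k)) :
    c ^ k ≤ (4 * k) ^ k * r.choose k := by
  have h1 : c ^ k * k.factorial ≤ ((4 * k) ^ k * r.choose k) * k.factorial := by
    calc c ^ k * k.factorial ≤ c ^ k * k ^ k := by
          gcongr
          exact Nat.factorial_le_pow k
      _ = (c * k) ^ k := (mul_pow c k k).symm
      _ ≤ (4 * (r + 1 - k) * k) ^ k := by gcongr
      _ = (4 * k) ^ k * (r + 1 - k) ^ k := by rw [← mul_pow]; ring_nf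
      _ ≤ (4 * k) ^ k * r.descFactorial k := by
          gcongr
          exact Nat.pow_sub_le_descFactorial r k
      _ = ((4 * k) ^ k * r.choose k) * k.factorial := by
          rw [Nat.descFactorial_eq_factorial_mul_choose]; ring
  exact Nat.le_of_mul_le_mul_right h1 k.factorial_pos

lemma exp_le_one_sub_inv {c : ℝ} (hc : 2 ≤ c) : Real.exp (-(2 / c)) ≤ 1 - 1 / c := by
  have hc0 : 0 < c := by linarith
  have h1 : (1 : ℝ) + 2 / c ≤ Real.exp (2 / c) := by
    have := Real.add_one_le_exp (2 / c)
    linarith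
  have h2 : (0 : ℝ) < 1 + 2 / c := by positivity
  have h3 : Real.exp (-(2 / c)) ≤ (1 + 2 / c)⁻¹ := by
    rw [Real.exp_neg]
    exact inv_anti₀ h2 h1
  refine h3.trans ?_
  rw [inv_le_iff_one_le_mul₀ h2]
  have : (1 - 1 / c) * (1 + 2 / c) = 1 + 1 / c - 2 / c ^ 2 := by
    field_simp
    ring
  rw [this]
  have : 2 / c ^ 2 ≤ 1 / c := by
    rw [div_le_div_iff₀ (by positivity) hc0]
    nlinarith
  linarith

lemma lemC {n k r c : ℕ} (hk : 1 ≤ k) (hrn : n ≤ 2 * r) (hrn' : r ≤ n)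
    (hkn : 8 * k ≤ n) (hc : c ≤ n) (hcn : n + 2 ≤ 2 * c) :
    pp k * (c : ℝ) ^ r ≤ (r.choose k : ℝ) * ((c - 1 : ℕ) : ℝ) ^ (r - k) := by
  have hkr : k ≤ r := by omega
  have hc2 : 2 ≤ c := by omega
  have hcR : (2 : ℝ) ≤ (c : ℝ) := by exact_mod_cast hc2
  have hc0 : (0 : ℝ) < c := by linarith
  -- claim 1
  have hcr : c ≤ 4 * (r + 1 - k) := by omega
  have claim1 : ((4 * k : ℝ))⁻¹ ^ k * (c : ℝ) ^ k ≤ (r.choose k : ℝ) := by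
    have := choose_lower hcr
    have hcast : (c : ℝ) ^ k ≤ ((4 * k : ℝ)) ^ k * (r.choose k : ℝ) := by
      exact_mod_cast this
    have h4k : (0 : ℝ) < (4 * k : ℝ) := by positivity
    rw [inv_pow]
    calc ((4 * k : ℝ) ^ k)⁻¹ * (c : ℝ) ^ k
        ≤ ((4 * k : ℝ) ^ k)⁻¹ * ((4 * k : ℝ) ^ k * (r.choose k : ℝ)) := by
          gcongr
      _ = (r.choose k : ℝ) := by
          rw [← mul_assoc, inv_mul_cancel₀ (by positivity), one_mul]
  -- claim 2
  have hcm1 : ((c - 1 : ℕ) : ℝ) = (c : ℝ) - 1 := by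
    have : (1 : ℕ) ≤ c := by omega
    push_cast [this]
    ring
  have claim2 : Real.exp (-4) * (c : ℝ) ^ (r - k) ≤ ((c - 1 : ℕ) : ℝ) ^ (r - k) := by
    rw [hcm1]
    have key : (c : ℝ) - 1 = (1 - 1 / c) * c := by field_simp
    rw [key, mul_pow]
    have hbase : Real.exp (-4) ≤ (1 - 1 / (c : ℝ)) ^ (r - k) := by
      have h1 : Real.exp (-(2 / (c : ℝ))) ^ (r - k) ≤ (1 - 1 / (c : ℝ)) ^ (r - k) :=
        pow_le_pow_left₀ (by positivity) (exp_le_one_sub_inv hcR) _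
      refine le_trans ?_ h1
      rw [← Real.exp_nat_mul]
      apply Real.exp_le_exp.mpr
      have hrk2c : ((r - k : ℕ) : ℝ) * 2 ≤ 4 * (c : ℝ) := by
        have h' : (r - k : ℕ) ≤ 2 * c := by omega
        have h'' := (Nat.cast_le (α := ℝ)).mpr h'
        push_cast at h'' ⊢
        linarith
      have hdiv : ((r - k : ℕ) : ℝ) * (2 / (c : ℝ)) ≤ 4 := by
        rw [mul_div_assoc']
        rw [div_le_iff₀ hc0]
        linarith
      rw [mul_neg]
      linarith
    calc Real.exp (-4) * (c : ℝ) ^ (r - k)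
        ≤ (1 - 1 / (c : ℝ)) ^ (r - k) * (c : ℝ) ^ (r - k) := by
          apply mul_le_mul_of_nonneg_right hbase (by positivity)
      _ = _ := rfl
  -- combine
  have hsplit : (c : ℝ) ^ r = (c : ℝ) ^ k * (c : ℝ) ^ (r - k) := by
    rw [← pow_add]
    congr 1
    omega
  rw [pp, hsplit]
  calc Real.exp (-4) * ((4 * k : ℝ))⁻¹ ^ k * ((c : ℝ) ^ k * (c : ℝ) ^ (r - k))
      = (((4 * k : ℝ))⁻¹ ^ k * (c : ℝ) ^ k) * (Real.exp (-4) * (c : ℝ) ^ (r - k)) := by ring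
    _ ≤ (r.choose k : ℝ) * ((c - 1 : ℕ) : ℝ) ^ (r - k) := by
        apply mul_le_mul claim1 claim2 (by positivity) (by positivity)


lemma classify_ok (n j : ℕ) (f : Fin n → Fin n) :
    ∀ i b, classify n j f i = some b → (b : ℕ) < j := by
  intro i b h
  unfold classify at h
  by_cases hc : (f i : ℕ) < j
  · rw [if_pos hc] at h
    injection h with h
    rw [← h]
    exact hc
  · rw [if_neg hc] at h
    cases h

lemma classify_eq_some_iff {n j : ℕ} {f : Fin n → Fin n} {b : Fin n}
    (hb : (b : ℕ) < j) (i : Fin n) :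
    classify n j f i = some b ↔ f i = b := by
  unfold classify
  by_cases h : (f i : ℕ) < j
  · rw [if_pos h]
    exact ⟨fun hh => Option.some_inj.mp hh, fun hh => by rw [hh]⟩
  · rw [if_neg h]
    constructor
    · intro hh
      cases hh
    · intro hh
      exact absurd (hh ▸ hb) h

lemma load_eq_of_classify_eq {n j : ℕ} {f f' : Fin n → Fin n} {b : Fin n}
    (hb : (b : ℕ) < j) (h : classify n j f = classify n j f') :
    load n f b = load n f' b := by
  unfold load
  congr 1
  ext i
  simp only [mem_filter, mem_univ, true_and]
  rw [← classify_eq_some_iff hb i, ← classify_eq_some_iff (f := f') hb i, h]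

lemma mem_Sset_of_classify {n k j : ℕ} {f f₀ : Fin n → Fin n} (hf₀ : f₀ ∈ Sset n k j)
    (h : classify n j f = classify n j f₀) : f ∈ Sset n k j := by
  simp only [Sset, mem_filter, mem_univ, true_and] at hf₀ ⊢
  intro b hb
  rw [load_eq_of_classify_eq hb h]
  exact hf₀ b hb

lemma Aset_card_ge {n k j : ℕ} (hk : 1 ≤ k) {f₀ : Fin n → Fin n} (hf₀ : f₀ ∈ Sset n k j) :
    n ≤ (Aset n j (classify n j f₀)).card + j * k := by
  have hsplit := Finset.card_filter_add_card_filter_not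
    (s := (univ : Finset (Fin n))) (p := fun i => classify n j f₀ i = none)
  have hcompl : ((univ : Finset (Fin n)).filter fun i => ¬ classify n j f₀ i = none).card
      ≤ j * k := by
    have heq : ((univ : Finset (Fin n)).filter fun i => ¬ classify n j f₀ i = none)
        = univ.filter fun i => (f₀ i : ℕ) < j := by
      ext i
      simp only [mem_filter, mem_univ, true_and]
      unfold classify
      by_cases h : (f₀ i : ℕ) < j <;> simp [h]
    rw [heq]
    have hmaps : ∀ i ∈ (univ : Finset (Fin n)).filter (fun i => (f₀ i : ℕ) < j),
        f₀ i ∈ (univ : Finset (Fin n)).filter (fun b : Fin n => (b : ℕ) < j) := by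
      intro i hi
      simp only [mem_filter, mem_univ, true_and] at hi ⊢
      exact hi
    have hfib : ∀ b ∈ (univ : Finset (Fin n)).filter (fun b : Fin n => (b : ℕ) < j),
        (((univ : Finset (Fin n)).filter (fun i => (f₀ i : ℕ) < j)).filter
          (fun i => f₀ i = b)).card ≤ k - 1 := by
      intro b hb
      simp only [mem_filter, mem_univ, true_and] at hb
      simp only [Sset, mem_filter, mem_univ, true_and] at hf₀
      have hload := hf₀ b hb
      have : (((univ : Finset (Fin n)).filter (fun i => (f₀ i : ℕ) < j)).filter
          (fun i => f₀ i = b)).card ≤ ((univ : Finset (Fin n)).filter (fun i => f₀ i = b)).card := by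
        apply Finset.card_le_card
        intro i hi
        simp only [mem_filter, mem_univ, true_and] at hi ⊢
        exact hi.2
      unfold load at hload
      omega
    have := Finset.card_le_mul_card_image_of_maps_to hmaps (k - 1) hfib
    have hlow := card_low n j
    calc ((univ : Finset (Fin n)).filter (fun i => (f₀ i : ℕ) < j)).card
        ≤ (k - 1) * ((univ : Finset (Fin n)).filter (fun b : Fin n => (b : ℕ) < j)).card := this
      _ ≤ (k - 1) * j := by exact Nat.mul_le_mul_left _ hlow
      _ ≤ j * k := by
          rw [Nat.mul_comm]
          exact Nat.mul_le_mul_left _ (Nat.sub_le k 1)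
  simp only [Finset.card_univ, Fintype.card_fin] at hsplit
  unfold Aset
  omega

lemma step {n k t : ℕ} (hk : 1 ≤ k) (htk : 2 * (t * k) ≤ n) (hkn : 8 * k ≤ n)
    {j : ℕ} (hj : j < t) :
    pp k * ((Sset n k j).card : ℝ) ≤ ((Sset n k j).card : ℝ) - ((Sset n k (j + 1)).card : ℝ) := by
  classical
  have ht2 : 2 * t ≤ n := le_trans (by nlinarith) htk
  have hjn : j < n := by omega
  set bj : Fin n := ⟨j, hjn⟩ with hbj
  set T := (Sset n k j).image (classify n j) with hT
  set Bad := (Sset n k j).filter (fun f => k ≤ load n f bj) with hBad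
  -- S_{j+1} and Bad partition S_j
  have hpart : ((Sset n k (j + 1)).card : ℝ) + (Bad.card : ℝ) = ((Sset n k j).card : ℝ) := by
    have hSj1 : Sset n k (j + 1) = (Sset n k j).filter (fun f => ¬ k ≤ load n f bj) := by
      ext f
      simp only [Sset, mem_filter, mem_univ, true_and, not_le]
      constructor
      · intro h
        refine ⟨fun b hb => h b (by omega), h bj (Nat.lt_succ_self j)⟩
      · rintro ⟨h1, h2⟩ b hb
        rcases Nat.lt_or_ge (b : ℕ) j with h | h
        · exact h1 b h
        · have : b = bj := by
            apply Fin.ext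
            simp [hbj]
            omega
          rw [this]
          exact h2
    have := Finset.card_filter_add_card_filter_not
      (s := Sset n k j) (p := fun f => k ≤ load n f bj)
    rw [hSj1, hBad]
    push_cast
    rw [← this]
    push_cast
    ring
  -- it suffices to bound Bad from below
  have hgoal : pp k * ((Sset n k j).card : ℝ) ≤ (Bad.card : ℝ) := by
    have h1 : (Sset n k j).card = ∑ g ∈ T, ((Sset n k j).filter
        (fun f => classify n j f = g)).card :=
      Finset.card_eq_sum_card_fiberwise (fun f hf => Finset.mem_image_of_mem _ hf)
    have h2 : Bad.card = ∑ g ∈ T, (Bad.filter (fun f => classify n j f = g)).card :=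
      Finset.card_eq_sum_card_fiberwise (fun f hf =>
        Finset.mem_image_of_mem _ (Finset.mem_filter.mp hf).1)
    rw [h1, h2]
    push_cast
    rw [Finset.mul_sum]
    apply Finset.sum_le_sum
    intro g hg
    -- per-class bound
    obtain ⟨f₀, hf₀, hgf₀⟩ := Finset.mem_image.mp hg
    have hok : ∀ i b, g i = some b → (b : ℕ) < j := hgf₀ ▸ classify_ok n j f₀
    have hfiber_eq : (Sset n k j).filter (fun f => classify n j f = g)
        = univ.filter (fun f => classify n j f = g) := by
      ext f
      simp only [mem_filter, mem_univ, true_and, and_iff_right_iff_imp]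
      intro h
      exact mem_Sset_of_classify hf₀ (h.trans hgf₀.symm)
    have hbad_eq : Bad.filter (fun f => classify n j f = g)
        = univ.filter (fun f => classify n j f = g ∧ k ≤ load n f bj) := by
      ext f
      simp only [hBad, mem_filter, mem_univ, true_and]
      constructor
      · rintro ⟨⟨h1, h2⟩, h3⟩
        exact ⟨h3, h2⟩
      · rintro ⟨h1, h2⟩
        exact ⟨⟨mem_Sset_of_classify hf₀ (h1.trans hgf₀.symm), h2⟩, h1⟩
    rw [hfiber_eq, hbad_eq]
    set r := (Aset n j g).card with hr
    -- bounds on r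
    have hrlen : n ≤ r + j * k := by
      have haux := Aset_card_ge hk hf₀
      rw [hgf₀] at haux
      rw [hr]
      exact haux
    have hrn : n ≤ 2 * r := by
      have : j * k ≤ t * k := Nat.mul_le_mul_right k (le_of_lt hj)
      omega
    have hrn' : r ≤ n := by
      rw [hr]
      calc (Aset n j g).card ≤ (univ : Finset (Fin n)).card := Finset.card_filter_le _ _
        _ = n := by simp
    have hcn : n + 2 ≤ 2 * (n - j) := by omega
    have hcnn : n - j ≤ n := Nat.sub_le n j
    have hlemC := lemC (r := r) (c := n - j) hk hrn hrn' hkn hcnn hcn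
    rw [card_fiber (k := k) hok]
    calc pp k * (((n - j) ^ r : ℕ) : ℝ)
        = pp k * ((n - j : ℕ) : ℝ) ^ r := by push_cast; ring
      _ ≤ (r.choose k : ℝ) * ((n - j - 1 : ℕ) : ℝ) ^ (r - k) := hlemC
      _ = ((r.choose k * (n - (j + 1)) ^ (r - k) : ℕ) : ℝ) := by
          rw [show n - j - 1 = n - (j + 1) from by omega]
          push_cast
          ring
      _ ≤ _ := by
          exact_mod_cast Nat.cast_le.mpr (target_card_ge hjn hok)
  linarith

lemma pp_pos {k : ℕ} (hk : 1 ≤ k) : 0 < pp k := by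
  unfold pp
  have : (0 : ℝ) < 4 * k := by positivity
  positivity

lemma pp_le_one {k : ℕ} (hk : 1 ≤ k) : pp k ≤ 1 := by
  unfold pp
  have h1 : Real.exp (-4) ≤ 1 := by
    rw [Real.exp_le_one_iff]
    norm_num
  have h2 : ((4 * k : ℝ))⁻¹ ^ k ≤ 1 := by
    apply pow_le_one₀ (by positivity)
    rw [inv_le_one_iff₀]
    right
    have : (1 : ℝ) ≤ k := by exact_mod_cast hk
    linarith
  nlinarith [Real.exp_pos (-4 : ℝ)]

lemma iterate {n k t : ℕ} (hk : 1 ≤ k) (htk : 2 * (t * k) ≤ n) (hkn : 8 * k ≤ n) :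
    ∀ j ≤ t, ((Sset n k j).card : ℝ) ≤ (1 - pp k) ^ j * (n : ℝ) ^ n := by
  intro j hj
  induction j with
  | zero =>
    have : Sset n k 0 = univ := by
      ext f
      simp [Sset]
    rw [this]
    simp [Finset.card_univ]
  | succ j ih =>
    have hj' : j ≤ t := by omega
    have ihj := ih hj'
    have hstep := step hk htk hkn (j := j) (by omega)
    have h1 : ((Sset n k (j + 1)).card : ℝ) ≤ (1 - pp k) * ((Sset n k j).card : ℝ) := by
      linarith
    calc ((Sset n k (j + 1)).card : ℝ)
        ≤ (1 - pp k) * ((Sset n k j).card : ℝ) := h1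
      _ ≤ (1 - pp k) * ((1 - pp k) ^ j * (n : ℝ) ^ n) := by
          apply mul_le_mul_of_nonneg_left ihj
          have := pp_le_one hk
          linarith
      _ = (1 - pp k) ^ (j + 1) * (n : ℝ) ^ n := by ring


set_option maxHeartbeats 1000000 in
lemma h13 : ∀ᶠ y : ℝ in atTop, 13 * Real.log y ^ 2 ≤ y := by
  filter_upwards [eventually_ge_atTop (43264 : ℝ)] with y hy
  have hy0 : (0 : ℝ) ≤ y := by linarith
  have hy1 : (0 : ℝ) < y := by linarith
  have h1 : Real.log y ≤ 4 * y ^ ((1 : ℝ)/4) := by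
    have := Real.log_le_rpow_div hy0 (by norm_num : (0:ℝ) < 1/4)
    calc Real.log y ≤ y ^ ((1:ℝ)/4) / (1/4) := this
      _ = 4 * y ^ ((1:ℝ)/4) := by ring
  have h0 : (0 : ℝ) ≤ y ^ ((1:ℝ)/4) := Real.rpow_nonneg hy0 _
  have h2 : Real.log y ^ 2 ≤ 16 * y ^ ((1:ℝ)/2) := by
    have hsq : Real.log y ^ 2 ≤ (4 * y ^ ((1:ℝ)/4)) ^ 2 :=
      pow_le_pow_left₀ (Real.log_nonneg (by linarith)) h1 2
    calc Real.log y ^ 2 ≤ (4 * y ^ ((1:ℝ)/4)) ^ 2 := hsq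
      _ = 16 * (y ^ ((1:ℝ)/4)) ^ (2:ℕ) := by ring
      _ = 16 * y ^ ((1:ℝ)/2) := by
          rw [← Real.rpow_natCast (y ^ ((1:ℝ)/4)) 2, ← Real.rpow_mul hy0]
          norm_num
  have h3 : (208 : ℝ) ≤ y ^ ((1:ℝ)/2) := by
    have hle : ((43264 : ℝ)) ^ ((1:ℝ)/2) ≤ y ^ ((1:ℝ)/2) :=
      Real.rpow_le_rpow (by norm_num) hy (by norm_num)
    have h208 : ((43264 : ℝ)) ^ ((1:ℝ)/2) = 208 := by
      rw [show (43264 : ℝ) = 208 ^ (2:ℕ) by norm_num]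
      rw [← Real.rpow_natCast (208:ℝ) 2, ← Real.rpow_mul (by norm_num)]
      norm_num
    linarith [h208 ▸ hle]
  have h4 : y ^ ((1:ℝ)/2) * y ^ ((1:ℝ)/2) = y := by
    rw [← Real.rpow_add hy1]
    norm_num
  calc 13 * Real.log y ^ 2 ≤ 13 * (16 * y ^ ((1:ℝ)/2)) := by linarith
    _ = 208 * y ^ ((1:ℝ)/2) := by ring
    _ ≤ y ^ ((1:ℝ)/2) * y ^ ((1:ℝ)/2) :=
        mul_le_mul_of_nonneg_right h3 (Real.rpow_nonneg hy0 _)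
    _ = y := h4

set_option maxHeartbeats 1000000 in
lemma analytic : ∀ᶠ n : ℕ in atTop,
    8 * kk n ≤ n ∧ Real.log n ≤ pp (kk n) * (tt n : ℝ) ∧ 1 ≤ n := by
  have hx : Tendsto (fun n : ℕ => (n : ℝ)) atTop atTop := tendsto_natCast_atTop_atTop
  have hlog : Tendsto (fun n : ℕ => Real.log n) atTop atTop :=
    Real.tendsto_log_atTop.comp hx
  have hm : Tendsto (fun n : ℕ => Real.log (Real.log n)) atTop atTop :=
    Real.tendsto_log_atTop.comp hlog
  have hmu : Tendsto (fun n : ℕ => Real.log (Real.log (Real.log n))) atTop atTop :=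
    Real.tendsto_log_atTop.comp hm
  filter_upwards [hm.eventually_ge_atTop 3,
    hmu.eventually_ge_atTop (3 * Real.log 2 + 1),
    hlog.eventually h13, hx.eventually h13,
    eventually_ge_atTop 1] with n hm3 hmu1 hL13 hx13 hn1
  -- notation
  set x : ℝ := (n : ℝ) with hxdef
  set l : ℝ := Real.log x with hldef
  set m : ℝ := Real.log l with hmdef
  set mu : ℝ := Real.log m with hmudef
  have hm0 : (0:ℝ) < m := by linarith
  have hl117 : (117 : ℝ) ≤ l := by nlinarith
  have hl0 : (0:ℝ) < l := by linarith
  set L : ℝ := l / m with hLdef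
  have hL13m : 13 * m ≤ L := by
    rw [hLdef, le_div_iff₀ hm0]
    nlinarith
  have hL39 : (39 : ℝ) ≤ L := by nlinarith
  have hLpos : (0:ℝ) < L := by linarith
  -- kk bounds
  have hkkdef : kk n = ⌊L⌋₊ + 1 := rfl
  have hkkub : (kk n : ℝ) ≤ L + 1 := by
    rw [hkkdef]
    push_cast
    have := Nat.floor_le (le_of_lt hLpos)
    linarith
  have hkklb : L < (kk n : ℝ) := by
    rw [hkkdef]
    push_cast
    exact Nat.lt_floor_add_one L
  have hkk1 : 1 ≤ kk n := by rw [hkkdef]; omega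
  clear_value x l m mu L
  have hkkpos : (0:ℝ) < (kk n : ℝ) := by positivity
  -- k ≤ l
  have hkl : (kk n : ℝ) ≤ l := by
    have : L + 1 ≤ l := by
      rw [hLdef]
      rw [div_add' _ _ _ (ne_of_gt hm0)]
      rw [div_le_iff₀ hm0]
      nlinarith
    linarith
  -- x large: 13 l^2 ≤ x
  have hxl : 16 * l ≤ x := by nlinarith
  -- 8 k ≤ n
  have h8k : 8 * kk n ≤ n := by
    have hcast8 : (8 * kk n : ℝ) ≤ x := by push_cast; nlinarith
    rw [hxdef] at hcast8
    exact_mod_cast hcast8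
  refine ⟨h8k, ?_, hn1⟩
  -- t lower bound
  have htlb : x / (4 * kk n) ≤ (tt n : ℝ) := by
    have hdm := Nat.div_add_mod n (2 * kk n)
    have hmod : n % (2 * kk n) < 2 * kk n := Nat.mod_lt n (by omega)
    have hcast : x < 2 * (kk n : ℝ) * (tt n : ℝ) + 2 * (kk n : ℝ) := by
      rw [hxdef]
      have : n < 2 * kk n * tt n + 2 * kk n := by
        rw [tt]
        omega
      exact_mod_cast this
    rw [div_le_iff₀ (by positivity)]
    nlinarith
  -- main log inequality
  have hmain : Real.exp 4 * (4 * (kk n : ℝ)) ^ (kk n + 1) * l ≤ x := by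
    have hlogform : Real.exp 4 * (4 * (kk n : ℝ)) ^ (kk n + 1) * l
        = Real.exp (4 + (kk n + 1 : ℕ) * Real.log (4 * (kk n : ℝ)) + m) := by
      rw [Real.exp_add, Real.exp_add]
      have h4kposx : (0:ℝ) < 4 * (kk n : ℝ) := by positivity
      congr 1
      · congr 1
        conv_lhs => rw [← Real.exp_log h4kposx]
        rw [← Real.exp_nat_mul]
      · rw [hmdef, Real.exp_log hl0]
    have hxpos : (0:ℝ) < x := by
      rw [hxdef]
      exact_mod_cast hn1
    rw [hlogform, show x = Real.exp l from by rw [hldef]; exact (Real.exp_log hxpos).symm]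
    apply Real.exp_le_exp.mpr
    -- bound log(4k)
    have hlog4k : Real.log (4 * (kk n : ℝ)) ≤ m - mu + 3 * Real.log 2 := by
      have h1 : (4 : ℝ) * (kk n : ℝ) ≤ 8 * L := by nlinarith
      have h2 : Real.log (4 * (kk n : ℝ)) ≤ Real.log (8 * L) :=
        Real.log_le_log (by positivity) h1
      have h3 : Real.log (8 * L) = 3 * Real.log 2 + Real.log l - Real.log m := by
        rw [show (8:ℝ) = 2 ^ (3:ℕ) by norm_num]
        rw [Real.log_mul (by norm_num) (ne_of_gt hLpos), Real.log_pow]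
        rw [hLdef, Real.log_div (ne_of_gt hl0) (ne_of_gt hm0)]
        push_cast
        ring
      rw [← hmdef, ← hmudef] at h3
      linarith
    have hmmu : mu ≤ m := by
      have := Real.log_le_sub_one_of_pos hm0
      linarith
    have hfac : (0:ℝ) ≤ m - mu + 3 * Real.log 2 := by
      have : (0:ℝ) ≤ Real.log 2 := Real.log_nonneg (by norm_num)
      linarith
    have hkk2 : ((kk n + 1 : ℕ) : ℝ) ≤ L + 2 := by push_cast; linarith
    have hstep : ((kk n + 1 : ℕ) : ℝ) * Real.log (4 * (kk n : ℝ))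
        ≤ (L + 2) * (m - mu + 3 * Real.log 2) := by
      apply mul_le_mul hkk2 hlog4k ?_ (by linarith)
      apply Real.log_nonneg
      have : (1:ℝ) ≤ (kk n : ℝ) := by exact_mod_cast hkk1
      linarith
    have hLm : L * m = l := by
      rw [hLdef]
      field_simp
    have hmu_ge : 1 ≤ mu - 3 * Real.log 2 := by linarith
    have hexp : (L + 2) * (m - mu + 3 * Real.log 2) ≤ l - L + 2 * m := by
      have e1 : (L + 2) * (m - mu + 3 * Real.log 2)
          = L * m - L * (mu - 3 * Real.log 2) + 2 * (m - mu + 3 * Real.log 2) := by ring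
      rw [e1, hLm]
      have e2 : L ≤ L * (mu - 3 * Real.log 2) := by nlinarith
      have e3 : m - mu + 3 * Real.log 2 ≤ m := by linarith
      linarith
    have hfinal : 4 + (L + 2) * (m - mu + 3 * Real.log 2) + m ≤ l := by
      have : l - L + 2 * m + m + 4 ≤ l := by nlinarith
      linarith
    linarith
  -- conclude
  have hppval : pp (kk n) * (tt n : ℝ)
      = Real.exp (-4) * ((4 * (kk n : ℝ))⁻¹) ^ kk n * (tt n : ℝ) := rfl
  have h4kpos : (0:ℝ) < 4 * (kk n : ℝ) := by positivity
  have hppos : (0:ℝ) < Real.exp (-4) * ((4 * (kk n : ℝ))⁻¹) ^ kk n := by positivity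
  calc l = Real.exp (-4) * ((4 * (kk n : ℝ))⁻¹) ^ kk n
        * (Real.exp 4 * (4 * (kk n : ℝ)) ^ kk n * l) := by
        rw [inv_pow]
        field_simp [Real.exp_neg]
        rw [← Real.exp_add]; norm_num
    _ ≤ Real.exp (-4) * ((4 * (kk n : ℝ))⁻¹) ^ kk n * (x / (4 * (kk n:ℝ))) := by
        apply mul_le_mul_of_nonneg_left ?_ (le_of_lt hppos)
        rw [le_div_iff₀ h4kpos]
        calc Real.exp 4 * (4 * (kk n : ℝ)) ^ kk n * l * (4 * (kk n:ℝ))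
            = Real.exp 4 * (4 * (kk n : ℝ)) ^ (kk n + 1) * l := by ring
          _ ≤ x := hmain
    _ ≤ Real.exp (-4) * ((4 * (kk n : ℝ))⁻¹) ^ kk n * (tt n : ℝ) := by
        apply mul_le_mul_of_nonneg_left htlb (le_of_lt hppos)
    _ = pp (kk n) * (tt n : ℝ) := by rw [hppval]


theorem main : ∃ N : ℕ, ∀ n : ℕ, N ≤ n →
    (Nat.card {f : Fin n → Fin n //
        (maxLoad n f : ℝ) < Real.log n / Real.log (Real.log n)} : ℝ) /
      (n : ℝ) ^ n ≤ 1 / n := by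
  have hev : ∀ᶠ n : ℕ in Filter.atTop,
      (Nat.card {f : Fin n → Fin n //
          (maxLoad n f : ℝ) < Real.log n / Real.log (Real.log n)} : ℝ) /
        (n : ℝ) ^ n ≤ 1 / n := by
    filter_upwards [analytic] with n hn
    obtain ⟨h8k, hpt, hn1⟩ := hn
    have hk1 : 1 ≤ kk n := Nat.succ_le_succ (Nat.zero_le _)
    have htk : 2 * (tt n * kk n) ≤ n := by
      have h := Nat.div_mul_le_self n (2 * kk n)
      calc 2 * (tt n * kk n) = (n / (2 * kk n)) * (2 * kk n) := by rw [tt]; ring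
        _ ≤ n := h
    have hsubset : ∀ f : Fin n → Fin n,
        (maxLoad n f : ℝ) < Real.log n / Real.log (Real.log n) →
        f ∈ Sset n (kk n) (tt n) := by
      intro f hf
      simp only [Sset, mem_filter, mem_univ, true_and]
      intro b _
      have hload : load n f b ≤ maxLoad n f := Finset.le_sup (Finset.mem_univ b)
      have h2 : (maxLoad n f : ℝ) < (kk n : ℝ) := by
        have hfl := Nat.lt_floor_add_one (Real.log n / Real.log (Real.log n))
        have hkkc : (kk n : ℝ)
            = (⌊Real.log n / Real.log (Real.log n)⌋₊ : ℝ) + 1 := by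
          rw [kk]; push_cast; ring
        rw [hkkc]
        exact lt_trans hf hfl
      have h1 : (load n f b : ℝ) < (kk n : ℝ) := by
        have : (load n f b : ℝ) ≤ (maxLoad n f : ℝ) := by exact_mod_cast hload
        linarith
      exact_mod_cast h1
    have hcard : (Nat.card {f : Fin n → Fin n //
        (maxLoad n f : ℝ) < Real.log n / Real.log (Real.log n)} : ℝ)
        ≤ ((Sset n (kk n) (tt n)).card : ℝ) := by
      have hnat : Nat.card {f : Fin n → Fin n //
          (maxLoad n f : ℝ) < Real.log n / Real.log (Real.log n)}
          ≤ (Sset n (kk n) (tt n)).card := by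
        have he : Function.Injective
            (fun fp : {f : Fin n → Fin n //
              (maxLoad n f : ℝ) < Real.log n / Real.log (Real.log n)} =>
              (⟨fp.1, hsubset fp.1 fp.2⟩ : {f : Fin n → Fin n // f ∈ Sset n (kk n) (tt n)})) := by
          intro a b h
          apply Subtype.ext
          simpa [Subtype.ext_iff] using h
        calc Nat.card {f : Fin n → Fin n //
              (maxLoad n f : ℝ) < Real.log n / Real.log (Real.log n)}
            ≤ Nat.card {f : Fin n → Fin n // f ∈ Sset n (kk n) (tt n)} :=
              Nat.card_le_card_of_injective _ he
          _ = (Sset n (kk n) (tt n)).card := by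
              rw [Nat.card_eq_fintype_card, Fintype.card_coe]
      exact_mod_cast hnat
    have hiter := iterate (n := n) hk1 htk h8k (tt n) le_rfl
    have hxpos : (0:ℝ) < (n:ℝ) := by exact_mod_cast hn1
    have hexp : (1 - pp (kk n)) ^ (tt n) ≤ 1 / (n:ℝ) := by
      have h1 : (1 - pp (kk n)) ≤ Real.exp (- pp (kk n)) := by
        have := Real.add_one_le_exp (- pp (kk n))
        linarith
      have h2 : (1 - pp (kk n)) ^ (tt n) ≤ Real.exp (- pp (kk n)) ^ (tt n) := by
        apply pow_le_pow_left₀ ?_ h1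
        have := pp_le_one hk1
        linarith
      have h3 : Real.exp (- pp (kk n)) ^ (tt n)
          = Real.exp ((tt n : ℝ) * (- pp (kk n))) := (Real.exp_nat_mul _ (tt n)).symm
      have h4 : Real.exp ((tt n : ℝ) * (- pp (kk n))) ≤ Real.exp (- Real.log n) := by
        apply Real.exp_le_exp.mpr
        rw [mul_neg, neg_le_neg_iff, mul_comm]
        exact hpt
      have h5 : Real.exp (- Real.log n) = 1 / (n:ℝ) := by
        rw [Real.exp_neg, Real.exp_log hxpos, one_div]
      calc (1 - pp (kk n)) ^ (tt n) ≤ Real.exp (- pp (kk n)) ^ (tt n) := h2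
        _ = Real.exp ((tt n : ℝ) * (- pp (kk n))) := h3
        _ ≤ Real.exp (- Real.log n) := h4
        _ = 1 / (n:ℝ) := h5
    rw [div_le_div_iff₀ (by positivity) hxpos]
    calc (Nat.card {f : Fin n → Fin n //
          (maxLoad n f : ℝ) < Real.log n / Real.log (Real.log n)} : ℝ) * (n:ℝ)
        ≤ ((Sset n (kk n) (tt n)).card : ℝ) * (n:ℝ) := by
          apply mul_le_mul_of_nonneg_right hcard (le_of_lt hxpos)
      _ ≤ ((1 - pp (kk n)) ^ (tt n) * (n : ℝ) ^ n) * (n:ℝ) := by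
          apply mul_le_mul_of_nonneg_right hiter (le_of_lt hxpos)
      _ ≤ ((1 / (n:ℝ)) * (n : ℝ) ^ n) * (n:ℝ) := by
          apply mul_le_mul_of_nonneg_right ?_ (le_of_lt hxpos)
          apply mul_le_mul_of_nonneg_right hexp (by positivity)
      _ = 1 * (n : ℝ) ^ n := by
          field_simp
  obtain ⟨N, hN⟩ := Filter.eventually_atTop.mp hev
  exact ⟨N, hN⟩

end BB

/-- Throwing `n` balls independently and uniformly at random into `n` bins,
for sufficiently large `n` the probability that the maximum load is less than
`log n / log log n` is at most `1/n`. -/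
theorem stmt1 :
    ∃ N : ℕ, ∀ n : ℕ, N ≤ n →
      (Nat.card {f : Fin n → Fin n //
          (maxLoad n f : ℝ) < Real.log n / Real.log (Real.log n)} : ℝ) /
        (n : ℝ) ^ n ≤ 1 / n := BB.main
end

section
/- If the maximum load of the repeated balls-into-bins process after t rounds is at most C·√t with probability at least 1 - 1/n^2 for each t, and the cover time of the delayed random walk of a ball is bounded by the number of rounds needed to accumulate c·n·log n progress steps, where progress over t rounds under FIFO is at least t/(C·√t) = √t/C, then the parallel cover time (time for all n balls to visit all nodes) is O(n^2 log^2 n) with high probability. -/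
open MeasureTheory
open scoped ENNReal

/-- Repeated balls-into-bins on `K_n`. `prog i t ω` is the progress (number of
forwardings) of ball `i` during the first `t` rounds and `cov i t` is the event
that ball `i` has visited all nodes by round `t`.  If, with probability
`≥ 1 - 1/n²`, every ball's progress over `t` rounds is at least `√t / C`
(as follows from the `O(√t)` maximum-load bound under FIFO), and a ball covers
all nodes once it has accumulated `c·n·log n` progress steps, then the parallel
cover time is `O(n² log² n)` with probability `≥ 1 - 1/n²`. -/
theorem stmt6 (n : ℕ) (hn : 2 ≤ n) (C c : ℝ) (hC : 0 < C) (hc : 0 < c)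
    {Ω : Type*} [MeasurableSpace Ω] (μ : Measure Ω) [IsProbabilityMeasure μ]
    (prog : Fin n → ℕ → Ω → ℕ)
    (cov : Fin n → ℕ → Set Ω)
    (hprog : ∀ t : ℕ,
      μ {ω | ∀ i : Fin n, Real.sqrt t / C ≤ (prog i t ω : ℝ)} ≥
        1 - (1 : ℝ≥0∞) / (n : ℝ≥0∞) ^ 2)
    (hcover : ∀ (i : Fin n) (t : ℕ),
      {ω | c * n * Real.log n ≤ (prog i t ω : ℝ)} ⊆ cov i t) :
    ∃ K : ℝ, 0 < K ∧
      μ (⋂ i : Fin n, cov i ⌈K * n ^ 2 * (Real.log n) ^ 2⌉₊) ≥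
        1 - (1 : ℝ≥0∞) / (n : ℝ≥0∞) ^ 2 := by
  refine ⟨(C * c) ^ 2, by positivity, ?_⟩
  set t := ⌈(C * c) ^ 2 * n ^ 2 * (Real.log n) ^ 2⌉₊ with ht
  refine le_trans (hprog t) (μ.mono ?_)
  intro ω hω
  simp only [Set.mem_iInter]
  intro i
  apply hcover i t
  have hlog : 0 ≤ Real.log n := Real.log_nonneg (by exact_mod_cast le_trans (by norm_num) hn)
  have ha : (0:ℝ) ≤ C * c * n * Real.log n := by positivity
  have hsq : (C * c * n * Real.log n) ^ 2 = (C * c) ^ 2 * n ^ 2 * (Real.log n) ^ 2 := by ring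
  have hle : (C * c) ^ 2 * n ^ 2 * (Real.log n) ^ 2 ≤ (t : ℝ) := Nat.le_ceil _
  have h1 : C * c * n * Real.log n ≤ Real.sqrt t := by
    rw [← Real.sqrt_sq ha, hsq]
    exact Real.sqrt_le_sqrt hle
  have h2 : c * n * Real.log n ≤ Real.sqrt t / C := by
    rw [le_div_iff₀ hC]
    calc c * n * Real.log n * C = C * c * n * Real.log n := by ring
      _ ≤ Real.sqrt t := h1
  exact le_trans h2 (hω i)
end
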